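/- Let u ∈ W with a reduced decomposition u = s_{j_l}⋯s_{j_1} and associated λ-sequence α^a = s_{j_1}⋯s_{j_{a−1}}(α_{j_a}) for 1 ≤ a ≤ l. Fix 1 ≤ r ≤ i ≤ l, w ∈ W and ν ∈ {ν_sht, ν_lng}. For β ∈ R set f(β) = 1 if ν_β = ν and w^{-1}(β) ∈ R_−, and f(β) = 0 otherwise; set g(β) = 0 if w^{-1}(β) ∈ R_+ and g(β) = −(ρ_ν^∨, w^{-1}(β)) if w^{-1}(β) ∈ R_−. Then g(α^i) + Σ_{a=r}^{i−1} f(s_{α^i}(α^a)) ≥ Σ_{a=r}^{i} f(α^a). -/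

import Mathlib

open scoped RealInnerProductSpace Classical

noncomputable section

/-- Euclidean space ℝⁿ. -/
abbrev EV (n : ℕ) := EuclideanSpace ℝ (Fin n)

/-- ν_α = (α,α)/2. -/
def nuu {n : ℕ} (α : EV n) : ℝ := ⟪α, α⟫ / 2

/-- α^∨ = 2α/(α,α). -/
def coroot {n : ℕ} (α : EV n) : EV n := (2 / ⟪α, α⟫) • α

/-- the reflection s_α. -/
def srefl {n : ℕ} (α : EV n) : EV n → EV n :=
  fun z => z - (2 * ⟪z, α⟫ / ⟪α, α⟫) • α

/-- the affine reflection s_ã attached to ã = [α, ν_α j], acting linearly on ℝⁿ × ℝ. -/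
def aRefl {n : ℕ} (p : EV n × ℝ) : EV n × ℝ → EV n × ℝ :=
  fun z => z - (2 * ⟪z.1, p.1⟫ / ⟪p.1, p.1⟫) • p

/-- the translation element b' ∈ Ŵ, b'([z,ζ]) = [z, ζ − (z,b)]. -/
def transl {n : ℕ} (b : EV n) : EV n × ℝ → EV n × ℝ :=
  fun z => (z.1, z.2 - ⟪z.1, b⟫)

/-- extension of a nonaffine transformation to ℝⁿ × ℝ. -/
def affExt {n : ℕ} (w : EV n → EV n) : EV n × ℝ → EV n × ℝ :=
  fun z => (w z.1, z.2)

/-- An irreducible reduced crystallographic root system in ℝⁿ, with a fixed system of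
positive/simple roots, normalized so that (α,α) = 2 for short roots; `hishort` is the
highest short root ϑ and `hiroot` the highest root θ. -/
structure RootCtx (n : ℕ) where
  R : Finset (EV n)
  pos : Finset (EV n)
  simple : Fin n → EV n
  hishort : EV n
  hiroot : EV n
  nonzero : ∀ α ∈ R, α ≠ (0 : EV n)
  neg_mem : ∀ α ∈ R, -α ∈ R
  reduced : ∀ α ∈ R, ∀ t : ℝ, t • α ∈ R → t = 1 ∨ t = -1
  crys : ∀ α ∈ R, ∀ β ∈ R, ∃ m : ℤ, 2 * ⟪β, α⟫ / ⟪α, α⟫ = (m : ℝ)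
  reflect_mem : ∀ α ∈ R, ∀ β ∈ R, β - (2 * ⟪β, α⟫ / ⟪α, α⟫) • α ∈ R
  span_top : Submodule.span ℝ (R : Set (EV n)) = ⊤
  pos_subset : pos ⊆ R
  pos_iff : ∀ α ∈ R, (α ∈ pos ↔ -α ∉ pos)
  simple_pos : ∀ i, simple i ∈ pos
  simple_inj : Function.Injective simple
  pos_sum : ∀ α ∈ pos, ∃ f : Fin n → ℕ, α = ∑ i, (f i : ℝ) • simple i
  irred : ∀ S : Finset (EV n), S ⊆ R → S.Nonempty →
      (∀ α ∈ S, ∀ β ∈ R, β ∉ S → ⟪α, β⟫ = 0) → S = R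
  normalized : ∀ α ∈ R, (∀ β ∈ R, ⟪α, α⟫ ≤ ⟪β, β⟫) → ⟪α, α⟫ = 2
  hishort_pos : hishort ∈ pos
  hishort_short : ⟪hishort, hishort⟫ = 2
  hishort_high : ∀ α ∈ R, ⟪α, α⟫ = 2 →
      ∃ f : Fin n → ℕ, hishort - α = ∑ i, (f i : ℝ) • simple i
  hiroot_pos : hiroot ∈ pos
  hiroot_high : ∀ α ∈ R, ∃ f : Fin n → ℕ, hiroot - α = ∑ i, (f i : ℝ) • simple i

namespace RootCtx

variable {n : ℕ} (c : RootCtx n)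

/-- word in the simple reflections of W; the letters are listed in the order of
application (the first letter of the list acts first), so `[i₁, …, i_l]`
represents s_{i_l} ⋯ s_{i_1}. -/
def wWord (L : List (Fin n)) : EV n → EV n :=
  L.foldl (fun f i => srefl (c.simple i) ∘ f) id

/-- membership in the Weyl group W. -/
def IsWeyl (w : EV n → EV n) : Prop := ∃ L : List (Fin n), w = c.wWord L

/-- λ(w) = {α ∈ R₊ : w(α) ∈ R₋}. -/
def lamW (w : EV n → EV n) : Finset (EV n) :=
  c.pos.filter (fun α => -(w α) ∈ c.pos)

/-- λ_ν(w). -/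
def lamWnu (w : EV n → EV n) (ν : ℝ) : Finset (EV n) :=
  (c.lamW w).filter (fun α => nuu α = ν)

/-- the length l(w) = |λ(w)| of w ∈ W. -/
def lenW (w : EV n → EV n) : ℕ := (c.lamW w).card

/-- ρ_ν = (1/2) Σ_{α ∈ R₊, ν_α = ν} α. -/
def rho (ν : ℝ) : EV n :=
  (1 / 2 : ℝ) • ∑ α ∈ c.pos.filter (fun α => nuu α = ν), α

/-- ρ_ν^∨ = ρ_ν / ν. -/
def rhoCheck (ν : ℝ) : EV n := ν⁻¹ • c.rho ν

/-- the affine root system R̃ ⊂ ℝⁿ × ℝ. -/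
def aR : Set (EV n × ℝ) := {p | ∃ α ∈ c.R, ∃ j : ℤ, p = (α, nuu α * j)}

/-- positive affine roots. -/
def aPos : Set (EV n × ℝ) :=
  {p | p ∈ c.aR ∧ (0 < p.2 ∨ (p.2 = 0 ∧ p.1 ∈ c.pos))}

/-- negative affine roots. -/
def aNeg : Set (EV n × ℝ) := {p | -p ∈ c.aPos}

/-- the affine simple roots α_0, α_1, …, α_n; the index 0 corresponds to
α₀ = [−ϑ, 1]. -/
def asimple : Fin (n + 1) → EV n × ℝ :=
  fun i => if h : i = 0 then (-c.hishort, (1 : ℝ)) else (c.simple (i.pred h), (0 : ℝ))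

/-- the affine simple reflections s_0, s_1, …, s_n. -/
def aS (i : Fin (n + 1)) : EV n × ℝ → EV n × ℝ := aRefl (c.asimple i)

/-- word in the affine simple reflections (letters in order of application). -/
def affWord (L : List (Fin (n + 1))) : EV n × ℝ → EV n × ℝ :=
  L.foldl (fun f i => c.aS i ∘ f) id

/-- the weight lattice P. -/
def PwSet : Set (EV n) :=
  {b | ∀ i, ∃ m : ℤ, 2 * ⟪b, c.simple i⟫ / ⟪c.simple i, c.simple i⟫ = (m : ℝ)}

/-- the dominant weights P₊. -/
def PplusSet : Set (EV n) :=
  {b | b ∈ c.PwSet ∧ ∀ i, 0 ≤ ⟪b, c.simple i⟫}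

/-- membership in the extended affine Weyl group Ŵ = W ⋉ P,
via the normal form w·b' with w ∈ W and b ∈ P. -/
def IsExtW (f : EV n × ℝ → EV n × ℝ) : Prop :=
  ∃ w b, c.IsWeyl w ∧ b ∈ c.PwSet ∧ f = affExt w ∘ transl b

/-- membership in Π = {π ∈ Ŵ : π(R̃₊) = R̃₊}. -/
def IsPi (f : EV n × ℝ → EV n × ℝ) : Prop :=
  c.IsExtW f ∧ f '' c.aPos = c.aPos

/-- the λ-set λ(ŵ) = R̃₊ ∩ ŵ⁻¹(R̃₋) of an affine transformation. -/
def aLam (f : EV n × ℝ → EV n × ℝ) : Set (EV n × ℝ) :=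
  {p | p ∈ c.aPos ∧ f p ∈ c.aNeg}

/-- the ν-part λ_ν(ŵ). -/
def aLamNu (f : EV n × ℝ → EV n × ℝ) (ν : ℝ) : Set (EV n × ℝ) :=
  {p | p ∈ c.aLam f ∧ nuu p.1 = ν}

/-- the length l(ŵ) = |λ(ŵ)|. -/
def aLen (f : EV n × ℝ → EV n × ℝ) : ℕ := (c.aLam f).ncard

/-- `(π, L)` is a reduced decomposition ŵ = π_r s_{i_l} ⋯ s_{i_1}: π ∈ Π and
the word length is minimal among all such presentations of the same element. -/
def IsReducedA (π : EV n × ℝ → EV n × ℝ) (L : List (Fin (n + 1))) : Prop :=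
  c.IsPi π ∧
    ∀ (π' : EV n × ℝ → EV n × ℝ) (L' : List (Fin (n + 1))),
      c.IsPi π' → π' ∘ c.affWord L' = π ∘ c.affWord L → L.length ≤ L'.length

/-- the λ-sequence α̃¹, α̃², … of a word (0-based indexing):
α̃^{k+1} = s_{i_1} s_{i_2} ⋯ s_{i_k}(α_{i_{k+1}}). -/
def lamSeq (L : List (Fin (n + 1))) (k : Fin L.length) : EV n × ℝ :=
  ((L.take k).foldr (fun i f => c.aS i ∘ f) id) (c.asimple (L.get k))

/-- the λ-sequence of a word in W (0-based indexing). -/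
def lamSeqW (L : List (Fin n)) (k : Fin L.length) : EV n :=
  ((L.take k).foldr (fun i f => srefl (c.simple i) ∘ f) id) (c.simple (L.get k))

end RootCtx

section Lemmas
namespace RootCtx

variable {n : ℕ} (c : RootCtx n)

lemma rinner_self_pos {α : EV n} (h : α ≠ 0) : 0 < ⟪α, α⟫ :=
  lt_of_le_of_ne real_inner_self_nonneg (Ne.symm ((inner_self_ne_zero (𝕜 := ℝ)).mpr h))

lemma inner_self_pos' {α : EV n} (h : α ∈ c.R) : 0 < ⟪α, α⟫ :=
  rinner_self_pos (c.nonzero α h)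

lemma inner_self_ne {α : EV n} (h : α ∈ c.R) : ⟪α, α⟫ ≠ 0 :=
  ne_of_gt (c.inner_self_pos' h)

lemma mem_R_of_pos {α : EV n} (h : α ∈ c.pos) : α ∈ c.R := c.pos_subset h

lemma neg_pos_iff {α : EV n} (h : α ∈ c.R) : ¬ α ∈ c.pos ↔ -α ∈ c.pos := by
  rw [c.pos_iff α h]; tauto

lemma not_neg_pos {α : EV n} (h : α ∈ c.pos) : -α ∉ c.pos :=
  (c.pos_iff α (c.mem_R_of_pos h)).mp h

end RootCtx

/-- srefl via coroot. -/
lemma srefl_eq {n : ℕ} (α x : EV n) : srefl α x = x - ⟪x, coroot α⟫ • α := by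
  unfold srefl coroot
  rw [real_inner_smul_right]
  ring_nf

lemma srefl_add {n : ℕ} (α x y : EV n) : srefl α (x + y) = srefl α x + srefl α y := by
  simp only [srefl, inner_add_left]
  match_scalars <;> ring

lemma srefl_smul {n : ℕ} (α : EV n) (t : ℝ) (x : EV n) :
    srefl α (t • x) = t • srefl α x := by
  simp only [srefl, real_inner_smul_left]
  match_scalars <;> ring

lemma srefl_neg {n : ℕ} (α x : EV n) : srefl α (-x) = - srefl α x := by
  have := srefl_smul α (-1) x
  simpa using this

lemma srefl_sub {n : ℕ} (α x y : EV n) : srefl α (x - y) = srefl α x - srefl α y := by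
  rw [sub_eq_add_neg, srefl_add, srefl_neg, sub_eq_add_neg]

lemma srefl_inner {n : ℕ} {α : EV n} (hα : ⟪α, α⟫ ≠ 0) (x y : EV n) :
    ⟪srefl α x, srefl α y⟫ = ⟪x, y⟫ := by
  simp only [srefl, inner_sub_left, inner_sub_right, real_inner_smul_left,
    real_inner_smul_right]
  rw [real_inner_comm α y]
  set A := ⟪α, α⟫ with hA
  set a := ⟪x, α⟫ with ha
  set b := ⟪y, α⟫ with hb
  field_simp
  ring

lemma srefl_invol {n : ℕ} {α : EV n} (hα : ⟪α, α⟫ ≠ 0) (x : EV n) :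
    srefl α (srefl α x) = x := by
  simp only [srefl, inner_sub_left, real_inner_smul_left]
  have key : ∀ a A : ℝ, A ≠ 0 → 2 * (a - 2 * a / A * A) / A = -(2 * a / A) := by
    intro a A hA; field_simp; ring
  rw [key _ _ hα]
  module

lemma srefl_self {n : ℕ} {α : EV n} (hα : ⟪α, α⟫ ≠ 0) : srefl α α = -α := by
  simp only [srefl]
  have key : ∀ A : ℝ, A ≠ 0 → 2 * A / A = 2 := by intro A hA; field_simp
  rw [key _ hα]
  module

lemma srefl_conj {n : ℕ} (W : EV n → EV n)
    (hWi : ∀ x y, ⟪W x, W y⟫ = ⟪x, y⟫)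
    (hWs : ∀ (t : ℝ) x, W (t • x) = t • W x)
    (hWsub : ∀ x y, W (x - y) = W x - W y)
    (x y : EV n) : srefl (W x) (W y) = W (srefl x y) := by
  simp only [srefl, hWi, hWsub, hWs]

lemma coroot_neg {n : ℕ} (x : EV n) : coroot (-x) = - coroot x := by
  simp only [coroot, inner_neg_neg, smul_neg]

lemma nuu_neg {n : ℕ} (x : EV n) : nuu (-x) = nuu x := by
  simp only [nuu, inner_neg_neg]

lemma inner_coroot_pos_iff {n : ℕ} {γ : EV n} (hγ : 0 < ⟪γ, γ⟫) (x : EV n) :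
    (0 < ⟪x, coroot γ⟫ ↔ 0 < ⟪x, γ⟫) := by
  simp only [coroot, real_inner_smul_right]
  have h2 : 0 < 2 / ⟪γ, γ⟫ := by positivity
  constructor
  · intro h
    by_contra hc
    push_neg at hc
    nlinarith
  · intro h
    positivity

namespace RootCtx

variable {n : ℕ} (c : RootCtx n)

/-- a "nice" map: inner-preserving, linear, maps R to R. -/
def Nice (W : EV n → EV n) : Prop :=
  (∀ x y, ⟪W x, W y⟫ = ⟪x, y⟫) ∧ (∀ x y, W (x + y) = W x + W y) ∧
    (∀ (t : ℝ) (x : EV n), W (t • x) = t • W x) ∧ (∀ α ∈ c.R, W α ∈ c.R)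

variable {c}

lemma Nice.inner {W : EV n → EV n} (h : c.Nice W) (x y : EV n) : ⟪W x, W y⟫ = ⟪x, y⟫ :=
  h.1 x y

lemma Nice.add {W : EV n → EV n} (h : c.Nice W) (x y : EV n) : W (x + y) = W x + W y :=
  h.2.1 x y

lemma Nice.smul {W : EV n → EV n} (h : c.Nice W) (t : ℝ) (x : EV n) : W (t • x) = t • W x :=
  h.2.2.1 t x

lemma Nice.rmem {W : EV n → EV n} (h : c.Nice W) {α : EV n} (hα : α ∈ c.R) : W α ∈ c.R :=
  h.2.2.2 α hα

lemma Nice.neg {W : EV n → EV n} (h : c.Nice W) (x : EV n) : W (-x) = - W x := by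
  have := h.smul (-1) x; simpa using this

lemma Nice.sub {W : EV n → EV n} (h : c.Nice W) (x y : EV n) : W (x - y) = W x - W y := by
  rw [sub_eq_add_neg, h.add, h.neg, sub_eq_add_neg]

lemma Nice.inj {W : EV n → EV n} (h : c.Nice W) {x y : EV n} (hxy : W x = W y) : x = y := by
  have h0 : ⟪x - y, x - y⟫ = 0 := by
    rw [← h.inner, h.sub, hxy, sub_self]
    simp
  have := (inner_self_eq_zero (𝕜 := ℝ)).mp h0
  exact sub_eq_zero.mp this

lemma Nice.nuu {W : EV n → EV n} (h : c.Nice W) (x : EV n) : nuu (W x) = nuu x := by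
  simp only [_root_.nuu, h.inner]

lemma Nice.coroot {W : EV n → EV n} (h : c.Nice W) (x : EV n) :
    coroot (W x) = W (coroot x) := by
  simp only [_root_.coroot, h.inner, h.smul]

lemma Nice.srefl_conj {W : EV n → EV n} (h : c.Nice W) (x y : EV n) :
    srefl (W x) (W y) = W (srefl x y) :=
  _root_.srefl_conj W h.inner h.smul h.sub x y

lemma nice_srefl {α : EV n} (hα : α ∈ c.R) : c.Nice (srefl α) :=
  ⟨srefl_inner (c.inner_self_ne hα), srefl_add α, srefl_smul α,
    fun β hβ => by
      have h2 : (2 / ⟪α, α⟫ * ⟪β, α⟫ : ℝ) = 2 * ⟪β, α⟫ / ⟪α, α⟫ := by ring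
      rw [srefl_eq, _root_.coroot, real_inner_smul_right, h2]
      exact c.reflect_mem α hα β hβ⟩

lemma nice_id : c.Nice id := by
  refine ⟨fun _ _ => rfl, fun _ _ => rfl, fun _ _ => rfl, fun α hα => hα⟩

lemma Nice.comp {W V : EV n → EV n} (hW : c.Nice W) (hV : c.Nice V) : c.Nice (W ∘ V) := by
  refine ⟨fun x y => ?_, fun x y => ?_, fun t x => ?_, fun α hα => ?_⟩
  · simp [Function.comp, hW.inner, hV.inner]
  · simp [Function.comp, hV.add, hW.add]
  · simp [Function.comp, hV.smul, hW.smul]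
  · exact hW.rmem (hV.rmem hα)

end RootCtx

namespace RootCtx

variable {n : ℕ} (c : RootCtx n)

lemma wWord_nil : c.wWord [] = id := rfl

lemma wWord_foldl_init (L : List (Fin n)) (g : EV n → EV n) :
    L.foldl (fun f i => srefl (c.simple i) ∘ f) g = c.wWord L ∘ g := by
  induction L generalizing g with
  | nil => simp [wWord]
  | cons i L ih =>
      simp only [wWord, List.foldl_cons]
      rw [ih, ih (srefl (c.simple i) ∘ id)]
      rfl

lemma wWord_cons (i : Fin n) (L : List (Fin n)) :
    c.wWord (i :: L) = c.wWord L ∘ srefl (c.simple i) := by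
  have := c.wWord_foldl_init L (srefl (c.simple i) ∘ id)
  simp only [wWord, List.foldl_cons] at *
  rw [this]
  rfl

lemma wWord_append (X Y : List (Fin n)) :
    c.wWord (X ++ Y) = c.wWord Y ∘ c.wWord X := by
  show (X ++ Y).foldl (fun f i => srefl (c.simple i) ∘ f) id = _
  rw [List.foldl_append]
  rw [show X.foldl (fun f i => srefl (c.simple i) ∘ f) id = c.wWord X from rfl]
  exact c.wWord_foldl_init Y (c.wWord X)

lemma simple_mem_R (i : Fin n) : c.simple i ∈ c.R := c.pos_subset (c.simple_pos i)

lemma nice_wWord (L : List (Fin n)) : c.Nice (c.wWord L) := by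
  induction L with
  | nil => exact c.nice_id
  | cons i L ih =>
      rw [c.wWord_cons]
      exact ih.comp (c.nice_srefl (c.simple_mem_R i))

/-- inverse word via foldr. -/
def wInv (L : List (Fin n)) : EV n → EV n :=
  L.foldr (fun i f => srefl (c.simple i) ∘ f) id

lemma wInv_nil : c.wInv [] = id := rfl

lemma wInv_cons (i : Fin n) (L : List (Fin n)) :
    c.wInv (i :: L) = srefl (c.simple i) ∘ c.wInv L := rfl

lemma wWord_wInv (L : List (Fin n)) (x : EV n) : c.wWord L (c.wInv L x) = x := by
  induction L generalizing x with
  | nil => rfl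
  | cons i L ih =>
      rw [c.wWord_cons, c.wInv_cons]
      simp only [Function.comp_apply]
      rw [srefl_invol (c.inner_self_ne (c.simple_mem_R i)), ih]

lemma wInv_wWord (L : List (Fin n)) (x : EV n) : c.wInv L (c.wWord L x) = x := by
  induction L generalizing x with
  | nil => rfl
  | cons i L ih =>
      rw [c.wWord_cons, c.wInv_cons]
      simp only [Function.comp_apply]
      rw [ih, srefl_invol (c.inner_self_ne (c.simple_mem_R i))]

lemma nice_wInv (L : List (Fin n)) : c.Nice (c.wInv L) := by
  induction L with
  | nil => exact c.nice_id
  | cons i L ih =>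
      rw [c.wInv_cons]
      exact (c.nice_srefl (c.simple_mem_R i)).comp ih

/-- every Weyl element is nice and has a nice two-sided inverse. -/
lemma isWeyl_nice {w : EV n → EV n} (hw : c.IsWeyl w) :
    c.Nice w ∧ ∃ w', c.Nice w' ∧ (∀ x, w (w' x) = x) ∧ (∀ x, w' (w x) = x) := by
  obtain ⟨L, rfl⟩ := hw
  exact ⟨c.nice_wWord L, c.wInv L, c.nice_wInv L, c.wWord_wInv L, c.wInv_wWord L⟩

end RootCtx

namespace RootCtx

variable {n : ℕ} (c : RootCtx n)

lemma exists_basis : ∃ b : Module.Basis (Fin n) ℝ (EV n), ∀ j, b j = c.simple j := by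
  have hspan : ⊤ ≤ Submodule.span ℝ (Set.range c.simple) := by
    rw [← c.span_top]
    apply Submodule.span_le.mpr
    intro α hα
    have hR : α ∈ c.R := by exact_mod_cast hα
    by_cases hp : α ∈ c.pos
    · obtain ⟨f, hf⟩ := c.pos_sum α hp
      rw [hf]
      exact Submodule.sum_mem _ fun i _ => Submodule.smul_mem _ _
        (Submodule.subset_span (Set.mem_range_self i))
    · have hn : -α ∈ c.pos := (c.neg_pos_iff hR).mp hp
      obtain ⟨f, hf⟩ := c.pos_sum _ hn
      have : α = -∑ i, (f i : ℝ) • c.simple i := by rw [← hf]; simp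
      rw [this]
      exact Submodule.neg_mem _ (Submodule.sum_mem _ fun i _ => Submodule.smul_mem _ _
        (Submodule.subset_span (Set.mem_range_self i)))
  have hli : LinearIndependent ℝ c.simple :=
    linearIndependent_of_top_le_span_of_card_eq_finrank hspan (by simp)
  exact ⟨Module.Basis.mk hli hspan, fun j => Module.Basis.mk_apply hli hspan j⟩

lemma repr_eq (b : Module.Basis (Fin n) ℝ (EV n)) (hb : ∀ j, b j = c.simple j)
    (f : Fin n → ℕ) {x : EV n} (hx : x = ∑ i, (f i : ℝ) • c.simple i) (j : Fin n) :
    b.repr x j = f j := by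
  have hx' : x = ∑ i, (f i : ℝ) • b i := by
    rw [hx]; exact Finset.sum_congr rfl fun i _ => by rw [hb i]
  rw [hx']
  simp [Finsupp.single_apply]

/-- the coordinate-sum functional. -/
def phiF (b : Module.Basis (Fin n) ℝ (EV n)) (x : EV n) : ℝ := ∑ j, b.repr x j

lemma phiF_add (x y : EV n) : phiF b (x + y) = phiF b x + phiF b y := by
  simp [phiF, Finset.sum_add_distrib]

lemma phiF_smul (t : ℝ) (x : EV n) : phiF b (t • x) = t * phiF b x := by
  simp [phiF, Finset.mul_sum]

lemma phiF_neg (x : EV n) : phiF b (-x) = - phiF b x := by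
  simp [phiF, Finset.sum_neg_distrib]

lemma phiF_pos (b : Module.Basis (Fin n) ℝ (EV n)) (hb : ∀ j, b j = c.simple j)
    {α : EV n} (hα : α ∈ c.pos) : 0 < phiF b α := by
  obtain ⟨f, hf⟩ := c.pos_sum α hα
  have hrepr : ∀ j, b.repr α j = f j := c.repr_eq b hb f hf
  have hne : α ≠ 0 := c.nonzero α (c.mem_R_of_pos hα)
  have : phiF b α = ∑ j, (f j : ℝ) := by
    simp [phiF, hrepr]
  rw [this]
  have hnonneg : ∀ j ∈ Finset.univ, (0:ℝ) ≤ (f j : ℝ) := fun j _ => Nat.cast_nonneg _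
  rcases (Finset.sum_le_sum hnonneg).lt_or_eq  with h | h
  · simpa using h
  · exfalso
    apply hne
    have hall : ∀ j ∈ Finset.univ, (f j : ℝ) = 0 := by
      intro j hj
      have h' : ∑ i : Fin n, ((f i : ℝ)) = 0 := by simpa using h.symm
      have := (Finset.sum_eq_zero_iff_of_nonneg hnonneg).mp h' j hj
      simpa using this
    rw [hf]
    apply Finset.sum_eq_zero
    intro j hj
    rw [hall j hj, zero_smul]

/-- if p + q = k • s with p,q,s positive roots then k > 0. -/
lemma k_pos_of_sum {p q s : EV n} (hp : p ∈ c.pos) (hq : q ∈ c.pos) (hs : s ∈ c.pos)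
    {k : ℝ} (hsum : p + q = k • s) : 0 < k := by
  obtain ⟨b, hb⟩ := c.exists_basis
  have h1 : phiF b p + phiF b q = k * phiF b s := by
    rw [← phiF_add, hsum, phiF_smul]
  have hps := c.phiF_pos b hb hp
  have hqs := c.phiF_pos b hb hq
  have hss := c.phiF_pos b hb hs
  by_contra hk
  push_neg at hk
  nlinarith

/-- δ, γ positive, reflection of δ not positive ⟹ ⟨δ, γ^∨⟩ > 0. -/
lemma inner_coroot_pos_of_neg {δ γ : EV n} (hδ : δ ∈ c.pos) (hγ : γ ∈ c.pos)
    (hneg : - srefl γ δ ∈ c.pos) : 0 < ⟪δ, coroot γ⟫ := by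
  have heq : (- srefl γ δ) + δ = ⟪δ, coroot γ⟫ • γ := by
    rw [srefl_eq]; abel
  exact c.k_pos_of_sum hneg hδ hγ heq

/-- simple reflections permute the positive roots other than the simple root. -/
lemma simple_perm {j : Fin n} {β : EV n} (hβ : β ∈ c.pos) (hne : β ≠ c.simple j) :
    srefl (c.simple j) β ∈ c.pos := by
  by_contra hc
  have hαjR : c.simple j ∈ c.R := c.simple_mem_R j
  have hβR : β ∈ c.R := c.mem_R_of_pos hβ
  have hsR : srefl (c.simple j) β ∈ c.R := (c.nice_srefl hαjR).rmem hβR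
  have hq : - srefl (c.simple j) β ∈ c.pos := (c.neg_pos_iff hsR).mp hc
  obtain ⟨b, hb⟩ := c.exists_basis
  obtain ⟨f, hf⟩ := c.pos_sum β hβ
  obtain ⟨g, hg⟩ := c.pos_sum _ hq
  set k := ⟪β, coroot (c.simple j)⟫ with hk
  have heq : β + (- srefl (c.simple j) β) = k • (c.simple j) := by rw [srefl_eq]; abel
  -- coordinates
  have hrepr : ∀ m, (f m : ℝ) + g m = k * (if j = m then 1 else 0) := by
    intro m
    have h1 : b.repr (β + (- srefl (c.simple j) β)) m = (f m : ℝ) + g m := by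
      rw [map_add]
      rw [Finsupp.add_apply]
      rw [c.repr_eq b hb f hf m, c.repr_eq b hb g hg m]
    have h2 : b.repr (k • (c.simple j)) m = k * (if j = m then 1 else 0) := by
      rw [map_smul, Finsupp.smul_apply]
      have : b.repr (c.simple j) m = (if j = m then 1 else 0) := by
        rw [← hb j]
        simp [Finsupp.single_apply]
      rw [this]
      simp
    rw [← h1, heq, h2]
  have hfm : ∀ m, m ≠ j → (f m : ℕ) = 0 := by
    intro m hm
    have := hrepr m
    rw [if_neg (Ne.symm hm)] at this
    have h0 : (f m : ℝ) + g m = 0 := by simpa using this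
    have := Nat.cast_nonneg (α := ℝ) (f m)
    have := Nat.cast_nonneg (α := ℝ) (g m)
    have hfm : (f m : ℝ) = 0 := by linarith
    exact_mod_cast hfm
  have hβeq : β = (f j : ℝ) • (c.simple j) := by
    rw [hf]
    rw [Finset.sum_eq_single j (fun m _ hm => by rw [hfm m hm]; simp)
      (fun h => absurd (Finset.mem_univ j) h)]
  have := c.reduced (c.simple j) hαjR (f j) (by rw [← hβeq]; exact hβR)
  rcases this with h1 | h1
  · exact hne (by rw [hβeq, h1, one_smul])
  · have : ((f j : ℝ)) ≥ 0 := Nat.cast_nonneg _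
    rw [h1] at this
    linarith

end RootCtx

namespace RootCtx

variable {n : ℕ} (c : RootCtx n)

lemma mem_lamW {u : EV n → EV n} {δ : EV n} :
    δ ∈ c.lamW u ↔ δ ∈ c.pos ∧ -(u δ) ∈ c.pos := Finset.mem_filter.trans (by tauto)

lemma step_core {u u' : EV n → EV n} (hu : c.Nice u) (hu' : c.Nice u')
    (huu' : ∀ x, u (u' x) = x) (hu'u : ∀ x, u' (u x) = x) (j : Fin n)
    {δ : EV n} (hδ : δ ∈ c.pos) :
    (-(srefl (c.simple j) (u δ)) ∈ c.pos ↔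
      ((-(u δ) ∈ c.pos ∧ δ ≠ -(u' (c.simple j))) ∨ δ = u' (c.simple j))) := by
  set αj := c.simple j with hαj
  have hαjR : αj ∈ c.R := c.simple_mem_R j
  have hαjne : ⟪αj, αj⟫ ≠ 0 := c.inner_self_ne hαjR
  have hδR : δ ∈ c.R := c.mem_R_of_pos hδ
  have huδR : u δ ∈ c.R := hu.rmem hδR
  have hξR : u' αj ∈ c.R := hu'.rmem hαjR
  by_cases h1 : u δ = αj
  · have hδξ : δ = u' αj := by rw [← h1, hu'u]
    rw [h1, srefl_self hαjne, neg_neg]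
    exact iff_of_true (c.simple_pos j) (Or.inr hδξ)
  by_cases h2 : u δ = -αj
  · have hδξ : δ = -(u' αj) := by
      have : u' (u δ) = u' (-αj) := by rw [h2]
      rw [hu'u, hu'.neg] at this
      exact this
    rw [h2, srefl_neg, srefl_self hαjne, neg_neg]
    have hna : -αj ∉ c.pos := c.not_neg_pos (c.simple_pos j)
    have hξ0 : u' αj ≠ 0 := c.nonzero _ hξR
    refine iff_of_false hna ?_
    rintro (⟨-, hn⟩ | h)
    · exact hn hδξ
    · apply hξ0
      rw [h] at hδξ
      have h0 : (2:ℝ) • u' αj = 0 := by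
        rw [two_smul]
        nth_rewrite 1 [hδξ]
        abel
      have := congrArg (fun z => (2:ℝ)⁻¹ • z) h0
      simpa [smul_smul] using this
  · -- generic case
    have hne1 : δ ≠ u' αj := fun h => h1 (by rw [h, huu'])
    have hne2 : δ ≠ -(u' αj) := by
      intro h
      apply h2
      rw [h, hu.neg, huu']
    constructor
    · intro hL
      by_cases h3 : -(u δ) ∈ c.pos
      · exact Or.inl ⟨h3, hne2⟩
      · exfalso
        have huδpos : u δ ∈ c.pos := by
          by_contra h4
          exact h3 ((c.neg_pos_iff huδR).mp h4)
        have := c.simple_perm huδpos h1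
        exact (c.not_neg_pos this) hL
    · rintro (⟨h3, -⟩ | h4)
      · have hNe : -(u δ) ≠ αj := fun h => h2 (by rw [← neg_neg (u δ), h])
        have := c.simple_perm h3 hNe
        rwa [srefl_neg] at this
      · exact absurd h4 hne1

lemma lamW_step_pos {u u' : EV n → EV n} (hu : c.Nice u) (hu' : c.Nice u')
    (huu' : ∀ x, u (u' x) = x) (hu'u : ∀ x, u' (u x) = x) (j : Fin n)
    (hξ : u' (c.simple j) ∈ c.pos) :
    c.lamW (srefl (c.simple j) ∘ u) = insert (u' (c.simple j)) (c.lamW u)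
      ∧ u' (c.simple j) ∉ c.lamW u := by
  constructor
  · ext δ
    rw [c.mem_lamW, Finset.mem_insert, c.mem_lamW]
    simp only [Function.comp_apply]
    constructor
    · rintro ⟨hδ, hL⟩
      rcases (c.step_core hu hu' huu' hu'u j hδ).mp hL with ⟨h3, -⟩ | h4
      · exact Or.inr ⟨hδ, h3⟩
      · exact Or.inl h4
    · rintro (h4 | ⟨hδ, h3⟩)
      · subst h4
        exact ⟨hξ, (c.step_core hu hu' huu' hu'u j hξ).mpr (Or.inr rfl)⟩
      · refine ⟨hδ, (c.step_core hu hu' huu' hu'u j hδ).mpr (Or.inl ⟨h3, ?_⟩)⟩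
        intro h
        rw [h] at hδ
        exact (c.not_neg_pos hξ) hδ
  · rw [c.mem_lamW]
    rintro ⟨-, h⟩
    rw [huu'] at h
    exact (c.not_neg_pos (c.simple_pos j)) h

lemma lamW_step_neg {u u' : EV n → EV n} (hu : c.Nice u) (hu' : c.Nice u')
    (huu' : ∀ x, u (u' x) = x) (hu'u : ∀ x, u' (u x) = x) (j : Fin n)
    (hξ : u' (c.simple j) ∉ c.pos) :
    c.lamW (srefl (c.simple j) ∘ u) = (c.lamW u).erase (-(u' (c.simple j)))
      ∧ -(u' (c.simple j)) ∈ c.lamW u := by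
  have hξR : u' (c.simple j) ∈ c.R := hu'.rmem (c.simple_mem_R j)
  have hnξ : -(u' (c.simple j)) ∈ c.pos := (c.neg_pos_iff hξR).mp hξ
  constructor
  · ext δ
    rw [c.mem_lamW, Finset.mem_erase, c.mem_lamW]
    simp only [Function.comp_apply]
    constructor
    · rintro ⟨hδ, hL⟩
      rcases (c.step_core hu hu' huu' hu'u j hδ).mp hL with ⟨h3, hne⟩ | h4
      · exact ⟨hne, hδ, h3⟩
      · exact absurd (h4 ▸ hδ) hξ
    · rintro ⟨hne, hδ, h3⟩
      exact ⟨hδ, (c.step_core hu hu' huu' hu'u j hδ).mpr (Or.inl ⟨h3, hne⟩)⟩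
  · rw [c.mem_lamW]
    refine ⟨hnξ, ?_⟩
    rw [hu.neg, huu', neg_neg]
    exact c.simple_pos j

end RootCtx

namespace RootCtx

variable {n : ℕ} (c : RootCtx n)

/-- prefix Weyl element. -/
def Pw (L : List (Fin n)) (a : ℕ) : EV n → EV n := c.wWord (L.take a)

/-- inverse of the prefix element. -/
def Qw (L : List (Fin n)) (a : ℕ) : EV n → EV n := c.wInv (L.take a)

lemma lamSeqW_eq (L : List (Fin n)) (k : Fin L.length) :
    c.lamSeqW L k = c.Qw L k (c.simple (L.get k)) := rfl

lemma Pw_nice (L : List (Fin n)) (a : ℕ) : c.Nice (c.Pw L a) := c.nice_wWord _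

lemma Qw_nice (L : List (Fin n)) (a : ℕ) : c.Nice (c.Qw L a) := c.nice_wInv _

lemma Pw_Qw (L : List (Fin n)) (a : ℕ) (x : EV n) : c.Pw L a (c.Qw L a x) = x :=
  c.wWord_wInv _ x

lemma Qw_Pw (L : List (Fin n)) (a : ℕ) (x : EV n) : c.Qw L a (c.Pw L a x) = x :=
  c.wInv_wWord _ x

lemma Pw_succ (L : List (Fin n)) (a : ℕ) (h : a < L.length) :
    c.Pw L (a + 1) = srefl (c.simple (L.get ⟨a, h⟩)) ∘ c.Pw L a := by
  unfold Pw
  rw [List.take_succ, List.getElem?_eq_getElem h]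
  have : (L.take a) ++ (some L[a]).toList = L.take a ++ [L[a]] := rfl
  rw [this, c.wWord_append]
  have hw : c.wWord [L[a]] = srefl (c.simple (L.get ⟨a, h⟩)) := by
    funext x
    simp [wWord, List.foldl]
  rw [hw]

lemma Pw_zero (L : List (Fin n)) : c.Pw L 0 = id := rfl

lemma lamW_id : c.lamW id = ∅ := by
  ext δ
  rw [c.mem_lamW]
  simp only [Finset.notMem_empty, iff_false, id_eq]
  rintro ⟨h1, h2⟩
  exact (c.not_neg_pos h1) h2

lemma Pw_stable (L : List (Fin n)) (a : ℕ) (h : L.length ≤ a) :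
    c.Pw L (a + 1) = c.Pw L a := by
  unfold Pw
  rw [List.take_of_length_le (by omega), List.take_of_length_le (by omega)]

lemma lenW_step_le (L : List (Fin n)) (a : ℕ) :
    c.lenW (c.Pw L (a + 1)) ≤ c.lenW (c.Pw L a) + 1 := by
  by_cases h : a < L.length
  · set j := L.get ⟨a, h⟩ with hj
    by_cases hξ : c.Qw L a (c.simple j) ∈ c.pos
    · have heq := (c.lamW_step_pos (c.Pw_nice L a) (c.Qw_nice L a) (c.Pw_Qw L a)
        (c.Qw_Pw L a) j hξ).1
      rw [← c.Pw_succ L a h] at heq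
      unfold lenW
      rw [heq]
      exact Finset.card_insert_le _ _
    · have heq := (c.lamW_step_neg (c.Pw_nice L a) (c.Qw_nice L a) (c.Pw_Qw L a)
        (c.Qw_Pw L a) j hξ).1
      rw [← c.Pw_succ L a h] at heq
      unfold lenW
      rw [heq]
      exact le_trans Finset.card_erase_le (Nat.le_succ _)
  · rw [c.Pw_stable L a (by omega)]
    omega

lemma lenW_le_self (L : List (Fin n)) (a : ℕ) : c.lenW (c.Pw L a) ≤ a := by
  induction a with
  | zero => simp [lenW, Pw_zero, lamW_id]
  | succ a ih => exact le_trans (c.lenW_step_le L a) (by omega)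

lemma lenW_drift (L : List (Fin n)) (a d : ℕ) :
    c.lenW (c.Pw L (a + d)) ≤ c.lenW (c.Pw L a) + d := by
  induction d with
  | zero => simp
  | succ d ih =>
      have h1 : a + (d + 1) = (a + d) + 1 := by omega
      rw [h1]
      exact le_trans (c.lenW_step_le L (a + d)) (by omega)

section Reduced

variable (L : List (Fin n)) (hred : L.length = c.lenW (c.wWord L))

include hred

lemma lenW_prefix (a : ℕ) (ha : a ≤ L.length) : c.lenW (c.Pw L a) = a := by
  have htop : c.lenW (c.Pw L L.length) = L.length := by
    unfold Pw
    rw [List.take_length]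
    omega
  have hd := c.lenW_drift L a (L.length - a)
  have heq : a + (L.length - a) = L.length := by omega
  rw [heq, htop] at hd
  have := c.lenW_le_self L a
  omega

lemma step_pos (a : ℕ) (h : a < L.length) :
    c.lamSeqW L ⟨a, h⟩ ∈ c.pos ∧
    c.lamW (c.Pw L (a+1)) = insert (c.lamSeqW L ⟨a, h⟩) (c.lamW (c.Pw L a)) ∧
    c.lamSeqW L ⟨a, h⟩ ∉ c.lamW (c.Pw L a) := by
  have hseq : c.lamSeqW L ⟨a, h⟩ = c.Qw L a (c.simple (L.get ⟨a, h⟩)) := rfl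
  by_cases hξ : c.Qw L a (c.simple (L.get ⟨a, h⟩)) ∈ c.pos
  · obtain ⟨heq, hnm⟩ := c.lamW_step_pos (c.Pw_nice L a) (c.Qw_nice L a) (c.Pw_Qw L a)
      (c.Qw_Pw L a) (L.get ⟨a, h⟩) hξ
    rw [← c.Pw_succ L a h] at heq
    exact ⟨hseq ▸ hξ, hseq ▸ heq, hseq ▸ hnm⟩
  · exfalso
    obtain ⟨heq, hm⟩ := c.lamW_step_neg (c.Pw_nice L a) (c.Qw_nice L a) (c.Pw_Qw L a)
      (c.Qw_Pw L a) (L.get ⟨a, h⟩) hξ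
    rw [← c.Pw_succ L a h] at heq
    have h1 : c.lenW (c.Pw L (a+1)) = a + 1 := c.lenW_prefix L hred (a+1) (Nat.succ_le_of_lt h)
    have h2 : c.lenW (c.Pw L a) = a := c.lenW_prefix L hred a (Nat.le_of_lt h)
    unfold lenW at h1 h2
    rw [heq, Finset.card_erase_of_mem hm, h2] at h1
    omega

lemma lamW_prefix_eq (a : ℕ) (ha : a ≤ L.length) :
    c.lamW (c.Pw L a) =
      (Finset.univ.filter (fun k : Fin L.length => (k : ℕ) < a)).image (c.lamSeqW L) := by
  induction a with
  | zero =>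
      rw [Pw_zero, lamW_id]
      have hemp : (Finset.univ.filter (fun k : Fin L.length => (k : ℕ) < 0)) = ∅ := by
        ext k; simp
      rw [hemp, Finset.image_empty]
  | succ a ih =>
      have h : a < L.length := by omega
      obtain ⟨-, heq, -⟩ := c.step_pos L hred a h
      rw [heq, ih (by omega)]
      have hins : (Finset.univ.filter (fun k : Fin L.length => (k : ℕ) < a + 1)) =
          insert ⟨a, h⟩ (Finset.univ.filter (fun k : Fin L.length => (k : ℕ) < a)) := by
        ext k
        simp only [Finset.mem_filter, Finset.mem_insert, Finset.mem_univ, true_and]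
        constructor
        · intro hk
          by_cases hka : (k : ℕ) = a
          · left; exact Fin.ext hka
          · right; omega
        · rintro (rfl | hk)
          · simp
          · omega
      rw [hins, Finset.image_insert]

lemma lamW_prefix_mono {a b : ℕ} (hab : a ≤ b) (hb : b ≤ L.length) :
    c.lamW (c.Pw L a) ⊆ c.lamW (c.Pw L b) := by
  rw [c.lamW_prefix_eq L hred a (by omega), c.lamW_prefix_eq L hred b hb]
  apply Finset.image_subset_image
  intro k
  simp only [Finset.mem_filter, Finset.mem_univ, true_and]
  omega

lemma seq_mem_lamW {k : Fin L.length} {a : ℕ} (hk : (k : ℕ) < a) (ha : a ≤ L.length) :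
    c.lamSeqW L k ∈ c.lamW (c.Pw L a) := by
  rw [c.lamW_prefix_eq L hred a ha]
  exact Finset.mem_image_of_mem _ (by simp [hk])

lemma seq_not_mem_lamW (k : Fin L.length) :
    c.lamSeqW L k ∉ c.lamW (c.Pw L k) :=
  (c.step_pos L hred k k.isLt).2.2

lemma lamSeqW_pos (k : Fin L.length) : c.lamSeqW L k ∈ c.pos :=
  (c.step_pos L hred k k.isLt).1

lemma lamSeqW_inj {k m : Fin L.length} (hkm : c.lamSeqW L k = c.lamSeqW L m) : k = m := by
  by_contra hne
  wlog h : (k : ℕ) < (m : ℕ) generalizing k m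
  · exact this hkm.symm (Ne.symm hne) (by omega)
  · have h1 : c.lamSeqW L k ∈ c.lamW (c.Pw L m) :=
      c.seq_mem_lamW L hred (by omega) (by omega)
    rw [hkm] at h1
    exact c.seq_not_mem_lamW L hred m h1

lemma Pw_seq_neg {k : Fin L.length} {a : ℕ} (hk : (k : ℕ) < a) (ha : a ≤ L.length) :
    -(c.Pw L a (c.lamSeqW L k)) ∈ c.pos :=
  ((c.mem_lamW).mp (c.seq_mem_lamW L hred hk ha)).2

lemma Pw_seq_pos {k : Fin L.length} {a : ℕ} (hk : a ≤ (k : ℕ)) :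
    c.Pw L a (c.lamSeqW L k) ∈ c.pos := by
  have hnm : c.lamSeqW L k ∉ c.lamW (c.Pw L a) := by
    intro hmem
    rw [c.lamW_prefix_eq L hred a (by omega)] at hmem
    obtain ⟨m, hm, hEq⟩ := Finset.mem_image.mp hmem
    simp only [Finset.mem_filter, Finset.mem_univ, true_and] at hm
    have := c.lamSeqW_inj L hred hEq
    omega
  have hpos := c.lamSeqW_pos L hred k
  have hR : c.Pw L a (c.lamSeqW L k) ∈ c.R :=
    (c.Pw_nice L a).rmem (c.mem_R_of_pos hpos)
  by_contra hcon
  apply hnm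
  rw [c.mem_lamW]
  exact ⟨hpos, (c.neg_pos_iff hR).mp hcon⟩

lemma Pw_complete {δ : EV n} {a : ℕ} (hδ : δ ∈ c.pos) (hneg : -(c.Pw L a δ) ∈ c.pos)
    (ha : a ≤ L.length) : ∃ k : Fin L.length, (k : ℕ) < a ∧ δ = c.lamSeqW L k := by
  have hmem : δ ∈ c.lamW (c.Pw L a) := (c.mem_lamW).mpr ⟨hδ, hneg⟩
  rw [c.lamW_prefix_eq L hred a ha] at hmem
  obtain ⟨k, hk, hEq⟩ := Finset.mem_image.mp hmem
  simp only [Finset.mem_filter, Finset.mem_univ, true_and] at hk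
  exact ⟨k, hk, hEq.symm⟩

end Reduced

end RootCtx

namespace RootCtx

variable {n : ℕ} (c : RootCtx n)

lemma inner_coroot_self {γ : EV n} (hγ : ⟪γ, γ⟫ ≠ 0) : ⟪γ, coroot γ⟫ = 2 := by
  rw [coroot, real_inner_smul_right]
  exact div_mul_cancel₀ 2 hγ

lemma inner_coroot_eq (x γ : EV n) : ⟪x, coroot γ⟫ = 2 * ⟪x, γ⟫ / ⟪γ, γ⟫ := by
  rw [coroot, real_inner_smul_right]
  ring

lemma srefl_inner_coroot {γ : EV n} (hγ : ⟪γ, γ⟫ ≠ 0) (x : EV n) :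
    ⟪srefl γ x, coroot γ⟫ = - ⟪x, coroot γ⟫ := by
  rw [srefl_eq, inner_sub_left, real_inner_smul_left, inner_coroot_self hγ]
  ring

/-- integrality of ⟨β, α^∨⟩. -/
lemma crys' {α β : EV n} (hα : α ∈ c.R) (hβ : β ∈ c.R) :
    ∃ m : ℤ, ⟪β, coroot α⟫ = (m : ℝ) := by
  obtain ⟨m, hm⟩ := c.crys α hα β hβ
  exact ⟨m, by rw [inner_coroot_eq]; exact hm⟩

lemma int_ge_one {x : ℝ} (hint : ∃ m : ℤ, x = (m : ℝ)) (hx : 0 < x) : 1 ≤ x := by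
  obtain ⟨m, rfl⟩ := hint
  have h1 : 0 < m := by exact_mod_cast hx
  have h2 : 1 ≤ m := by omega
  exact_mod_cast h2

/-- ratio bound: for roots δ, β with ⟨δ, β^∨⟩ > 0 we have ⟨δ, β^∨⟩ ≥ ν_δ/ν_β. -/
lemma coroot_ratio {δ β : EV n} (hδ : δ ∈ c.R) (hβ : β ∈ c.R)
    (hpos : 0 < ⟪δ, coroot β⟫) : nuu δ / nuu β ≤ ⟪δ, coroot β⟫ := by
  have hA : 0 < ⟪δ, δ⟫ := c.inner_self_pos' hδ
  have hB : 0 < ⟪β, β⟫ := c.inner_self_pos' hβ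
  have h1 : ⟪δ, coroot β⟫ = 2 * ⟪δ, β⟫ / ⟪β, β⟫ := inner_coroot_eq δ β
  have ht : 0 < ⟪δ, β⟫ := by
    rw [h1] at hpos
    rcases div_pos_iff.mp hpos with ⟨h, -⟩ | ⟨-, h⟩
    · linarith
    · linarith
  have h2 : ⟪β, coroot δ⟫ = 2 * ⟪δ, β⟫ / ⟪δ, δ⟫ := by
    rw [inner_coroot_eq, real_inner_comm]
  have h3 : 0 < ⟪β, coroot δ⟫ := by rw [h2]; positivity
  have h4 : 1 ≤ ⟪β, coroot δ⟫ := int_ge_one (c.crys' hδ hβ) h3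
  rw [h2] at h4
  rw [h1]
  unfold nuu
  rw [div_le_div_iff₀ (by positivity) hB]
  have h5 : ⟪δ, δ⟫ ≤ 2 * ⟪δ, β⟫ := by
    rw [le_div_iff₀ hA] at h4
    linarith
  nlinarith

/-- the ν-part of λ(s_γ). -/
def lamNuSet (γ : EV n) (ν : ℝ) : Finset (EV n) :=
  c.pos.filter (fun α => nuu α = ν ∧ -(srefl γ α) ∈ c.pos)

lemma lamNuSet_inner_pos {γ : EV n} (hγ : γ ∈ c.pos) {ν : ℝ} {α : EV n}
    (hα : α ∈ c.lamNuSet γ ν) : 0 < ⟪α, coroot γ⟫ := by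
  rw [lamNuSet, Finset.mem_filter] at hα
  exact c.inner_coroot_pos_of_neg hα.1 hγ hα.2.2

/-- key identity: 2(ρ_ν, γ^∨) = Σ_{α ∈ λ_ν(s_γ)} (α, γ^∨). -/
lemma two_rho_coroot {γ : EV n} (hγ : γ ∈ c.pos) (ν : ℝ) :
    2 * ⟪c.rho ν, coroot γ⟫ = ∑ α ∈ c.lamNuSet γ ν, ⟪α, coroot γ⟫ := by
  have hγR : γ ∈ c.R := c.mem_R_of_pos hγ
  have hγν : ⟪γ, γ⟫ ≠ 0 := c.inner_self_ne hγR
  have h1 : 2 * ⟪c.rho ν, coroot γ⟫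
      = ∑ α ∈ c.pos.filter (fun α => nuu α = ν), ⟪α, coroot γ⟫ := by
    rw [rho, real_inner_smul_left, sum_inner]
    ring
  rw [h1]
  rw [← Finset.sum_filter_add_sum_filter_not (c.pos.filter (fun α => nuu α = ν))
    (fun α => -(srefl γ α) ∈ c.pos)]
  have h2 : (c.pos.filter (fun α => nuu α = ν)).filter (fun α => -(srefl γ α) ∈ c.pos)
      = c.lamNuSet γ ν := by
    rw [lamNuSet, Finset.filter_filter]
  have h3 : ∑ α ∈ (c.pos.filter (fun α => nuu α = ν)).filter
      (fun α => ¬ -(srefl γ α) ∈ c.pos), ⟪α, coroot γ⟫ = 0 := by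
    apply Finset.sum_involution (fun α _ => srefl γ α)
    · intro α ha
      rw [srefl_inner_coroot hγν]
      ring
    · intro α ha hne
      intro hEq
      apply hne
      have : α - srefl γ α = ⟪α, coroot γ⟫ • γ := by rw [srefl_eq]; abel
      rw [hEq, sub_self] at this
      rcases smul_eq_zero.mp this.symm with h | h
      · exact h
      · exact absurd h (c.nonzero γ hγR)
    · intro α ha
      simp only [Finset.mem_filter] at ha ⊢
      obtain ⟨⟨hp, hν'⟩, hns⟩ := ha
      have hαR : α ∈ c.R := c.mem_R_of_pos hp
      have hsR : srefl γ α ∈ c.R := (c.nice_srefl hγR).rmem hαR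
      have hspos : srefl γ α ∈ c.pos := by
        by_contra hcon
        exact hns ((c.neg_pos_iff hsR).mp hcon)
      refine ⟨⟨hspos, ?_⟩, ?_⟩
      · rw [← hν']
        exact (c.nice_srefl hγR).nuu α
      · rw [srefl_invol hγν]
        exact c.not_neg_pos hp
    · intro α ha
      exact srefl_invol hγν α
  rw [h2, h3]
  ring

/-- the main counting bound. -/
lemma main_count {γ : EV n} (hγ : γ ∈ c.pos) {ν : ℝ} (hν : 0 < ν)
    (S : Finset (EV n)) (hS : S ⊆ c.lamNuSet γ ν) (hγS : γ ∉ S)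
    (hlow : ∀ α ∈ S, ν / nuu γ ≤ ⟪α, coroot γ⟫) :
    (if nuu γ = ν then (1:ℝ) else 0) + (S.card : ℝ) / 2 ≤ ⟪c.rhoCheck ν, γ⟫ := by
  have hγR : γ ∈ c.R := c.mem_R_of_pos hγ
  have hγ2 : 0 < ⟪γ, γ⟫ := c.inner_self_pos' hγR
  have hnuγ : 0 < nuu γ := by rw [nuu]; positivity
  -- lower bound for the sum over lamNuSet
  have hsum : (if nuu γ = ν then (2:ℝ) else 0) + (S.card : ℝ) * (ν / nuu γ)
      ≤ ∑ α ∈ c.lamNuSet γ ν, ⟪α, coroot γ⟫ := by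
    by_cases hcase : nuu γ = ν
    · rw [if_pos hcase]
      have hγmem : γ ∈ c.lamNuSet γ ν := by
        rw [lamNuSet, Finset.mem_filter]
        refine ⟨hγ, hcase, ?_⟩
        rw [srefl_self (ne_of_gt hγ2), neg_neg]
        exact hγ
      have hsub : insert γ S ⊆ c.lamNuSet γ ν := by
        intro x hx
        rcases Finset.mem_insert.mp hx with rfl | hx
        · exact hγmem
        · exact hS hx
      have h5 : ∑ α ∈ insert γ S, ⟪α, coroot γ⟫ ≤ ∑ α ∈ c.lamNuSet γ ν, ⟪α, coroot γ⟫ :=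
        Finset.sum_le_sum_of_subset_of_nonneg hsub
          (fun α hα _ => le_of_lt (c.lamNuSet_inner_pos hγ hα))
      rw [Finset.sum_insert hγS, inner_coroot_self (ne_of_gt hγ2)] at h5
      have h6 : (S.card : ℝ) * (ν / nuu γ) ≤ ∑ α ∈ S, ⟪α, coroot γ⟫ := by
        calc (S.card : ℝ) * (ν / nuu γ) = ∑ _α ∈ S, (ν / nuu γ) := by
              rw [Finset.sum_const, nsmul_eq_mul]
          _ ≤ ∑ α ∈ S, ⟪α, coroot γ⟫ := Finset.sum_le_sum hlow
      linarith
    · rw [if_neg hcase]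
      have h5 : ∑ α ∈ S, ⟪α, coroot γ⟫ ≤ ∑ α ∈ c.lamNuSet γ ν, ⟪α, coroot γ⟫ :=
        Finset.sum_le_sum_of_subset_of_nonneg hS
          (fun α hα _ => le_of_lt (c.lamNuSet_inner_pos hγ hα))
      have h6 : (S.card : ℝ) * (ν / nuu γ) ≤ ∑ α ∈ S, ⟪α, coroot γ⟫ := by
        calc (S.card : ℝ) * (ν / nuu γ) = ∑ _α ∈ S, (ν / nuu γ) := by
              rw [Finset.sum_const, nsmul_eq_mul]
          _ ≤ ∑ α ∈ S, ⟪α, coroot γ⟫ := Finset.sum_le_sum hlow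
      linarith
  rw [← c.two_rho_coroot hγ ν] at hsum
  -- convert to rhoCheck
  have hrc : ⟪c.rhoCheck ν, γ⟫ = (nuu γ / ν) * ⟪c.rho ν, coroot γ⟫ := by
    have key2 : ∀ A r ν' : ℝ, A ≠ 0 → ν' ≠ 0 → ν'⁻¹ * r = (A / 2 / ν') * (2 * r / A) := by
      intro A r ν' hA hν'
      field_simp
    rw [rhoCheck, real_inner_smul_left, inner_coroot_eq, nuu]
    exact key2 _ _ _ (ne_of_gt hγ2) (ne_of_gt hν)
  rw [hrc]
  by_cases hcase : nuu γ = ν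
  · rw [if_pos hcase] at hsum ⊢
    rw [hcase]
    have hν' : ν / ν = 1 := div_self (ne_of_gt hν)
    rw [hν', one_mul]
    rw [hcase] at hsum
    have : (S.card : ℝ) * (ν / ν) = S.card := by rw [hν', mul_one]
    rw [this] at hsum
    linarith
  · rw [if_neg hcase] at hsum ⊢
    have key : (S.card : ℝ) * (ν / nuu γ) ≤ 2 * ⟪c.rho ν, coroot γ⟫ := by linarith
    have hsc : (nuu γ / ν) * ((S.card : ℝ) * (ν / nuu γ)) = S.card := by
      field_simp
    calc (0:ℝ) + (S.card : ℝ) / 2 = (S.card : ℝ) / 2 := by ring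
      _ ≤ (nuu γ / ν) * ⟪c.rho ν, coroot γ⟫ := by
          have hpos : (0:ℝ) < nuu γ / ν := by positivity
          have h7 := mul_le_mul_of_nonneg_left key hpos.le
          rw [hsc] at h7
          have h8 : (nuu γ / ν) * (2 * ⟪c.rho ν, coroot γ⟫)
              = 2 * ((nuu γ / ν) * ⟪c.rho ν, coroot γ⟫) := by ring
          rw [h8] at h7
          linarith
  
end RootCtx

end Lemmas

open RootCtx in
theorem t_order_inequality_nonaffine' {n : ℕ} (c : RootCtx n)
    (L : List (Fin n)) (hred : L.length = c.lenW (c.wWord L))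
    (r i : Fin L.length) (hri : r ≤ i)
    (w v : EV n → EV n) (hw : c.IsWeyl w) (hv : c.IsWeyl v)
    (hinv : ∀ x, v (w x) = x ∧ w (v x) = x)
    (ν : ℝ) (hν : ∃ γ ∈ c.R, nuu γ = ν)
    (f : EV n → ℝ)
    (hf : f = fun β => if nuu β = ν ∧ -(v β) ∈ c.pos then 1 else 0)
    (g : EV n → ℝ)
    (hg : g = fun β => if v β ∈ c.pos then 0 else -⟪c.rhoCheck ν, v β⟫) :
    (∑ a ∈ Finset.univ.filter (fun a : Fin L.length => r ≤ a ∧ a ≤ i),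
        f (c.lamSeqW L a))
      ≤ g (c.lamSeqW L i) +
        ∑ a ∈ Finset.univ.filter (fun a : Fin L.length => r ≤ a ∧ a < i),
          f (srefl (c.lamSeqW L i) (c.lamSeqW L a)) := by
  have hfval : ∀ x, f x = if nuu x = ν ∧ -(v x) ∈ c.pos then (1:ℝ) else 0 :=
    fun x => by rw [hf]
  have hgval : ∀ x, g x = if v x ∈ c.pos then 0 else -⟪c.rhoCheck ν, v x⟫ :=
    fun x => by rw [hg]
  have hf0 : ∀ x, 0 ≤ f x := by
    intro x
    rw [hfval]
    split <;> norm_num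
  have hfle : ∀ x, f x ≤ 1 := by
    intro x
    rw [hfval]
    split <;> norm_num
  have hriN : (r : ℕ) ≤ (i : ℕ) := hri
  have hiN : (i : ℕ) < L.length := i.isLt
  obtain ⟨hvN, -⟩ := c.isWeyl_nice hv
  have hvinj : ∀ {x y : EV n}, v x = v y → x = y := by
    intro x y hxy
    have h := congrArg w hxy
    rw [(hinv x).2, (hinv y).2] at h
    exact h
  have hν0 : 0 < ν := by
    obtain ⟨γ', hγ'R, hγ'ν⟩ := hν
    rw [← hγ'ν]
    unfold nuu
    have := c.inner_self_pos' hγ'R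
    linarith
  have hseqpos : ∀ k : Fin L.length, c.lamSeqW L k ∈ c.pos := c.lamSeqW_pos L hred
  have hseqR : ∀ k : Fin L.length, c.lamSeqW L k ∈ c.R := fun k => c.mem_R_of_pos (hseqpos k)
  have hseqinj : ∀ {k m : Fin L.length}, c.lamSeqW L k = c.lamSeqW L m → k = m :=
    fun h => c.lamSeqW_inj L hred h
  have hβpos : c.lamSeqW L i ∈ c.pos := hseqpos i
  have hβR : c.lamSeqW L i ∈ c.R := hseqR i
  have hβne : ⟪c.lamSeqW L i, c.lamSeqW L i⟫ ≠ 0 := c.inner_self_ne hβR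
  have hsβnice : c.Nice (srefl (c.lamSeqW L i)) := c.nice_srefl hβR
  have hPiβ : c.Pw L i (c.lamSeqW L i) = c.simple (L.get i) := c.Pw_Qw L i _
  have hPis : ∀ z, c.Pw L ((i : ℕ) + 1) (srefl (c.lamSeqW L i) z) = c.Pw L i z := by
    intro z
    rw [c.Pw_succ L i i.isLt]
    simp only [Function.comp_apply]
    have h1 : c.Pw L i (srefl (c.lamSeqW L i) z)
        = srefl (c.Pw L i (c.lamSeqW L i)) (c.Pw L i z) :=
      ((c.Pw_nice L i).srefl_conj (c.lamSeqW L i) z).symm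
    rw [h1, hPiβ]
    exact srefl_invol (c.inner_self_ne (c.simple_mem_R (L.get i))) _
  -- index sets
  set T := Finset.univ.filter (fun a : Fin L.length => r ≤ a ∧ a < i) with hT
  have hiT : i ∉ T := by
    rw [hT]
    simp only [Finset.mem_filter, Finset.mem_univ, true_and]
    rintro ⟨-, hlt⟩
    exact lt_irrefl i hlt
  have hsplit : Finset.univ.filter (fun a : Fin L.length => r ≤ a ∧ a ≤ i) = insert i T := by
    ext a
    rw [hT]
    simp only [Finset.mem_filter, Finset.mem_insert, Finset.mem_univ, true_and]
    constructor
    · rintro ⟨h1, h2⟩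
      rcases eq_or_lt_of_le h2 with h3 | h3
      · exact Or.inl h3
      · exact Or.inr ⟨h1, h3⟩
    · rintro (rfl | ⟨h1, h2⟩)
      · exact ⟨hri, le_refl _⟩
      · exact ⟨h1, le_of_lt h2⟩
  have hTfacts : ∀ a ∈ T, (r : ℕ) ≤ (a : ℕ) ∧ (a : ℕ) < (i : ℕ) := by
    intro a ha
    rw [hT] at ha
    simp only [Finset.mem_filter, Finset.mem_univ, true_and] at ha
    exact ⟨ha.1, ha.2⟩
  have hkpos : ∀ a ∈ T, ¬ (c.Pw L r (srefl (c.lamSeqW L i) (c.lamSeqW L a)) ∈ c.pos) →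
      0 < ⟪c.lamSeqW L a, coroot (c.lamSeqW L i)⟫ := by
    intro a ha hB
    obtain ⟨har, hai⟩ := hTfacts a ha
    have h1 : c.Pw L r (srefl (c.lamSeqW L i) (c.lamSeqW L a))
        = srefl (c.Pw L r (c.lamSeqW L i)) (c.Pw L r (c.lamSeqW L a)) :=
      ((c.Pw_nice L r).srefl_conj _ _).symm
    have hPrβ : c.Pw L r (c.lamSeqW L i) ∈ c.pos := c.Pw_seq_pos L hred hriN
    have hPra : c.Pw L r (c.lamSeqW L a) ∈ c.pos := c.Pw_seq_pos L hred har
    have hsR : srefl (c.Pw L r (c.lamSeqW L i)) (c.Pw L r (c.lamSeqW L a)) ∈ c.R :=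
      (c.nice_srefl ((c.Pw_nice L r).rmem hβR)).rmem ((c.Pw_nice L r).rmem (hseqR a))
    rw [h1] at hB
    have hneg := (c.neg_pos_iff hsR).mp hB
    have h2 := c.inner_coroot_pos_of_neg hPra hPrβ hneg
    have h3 : ⟪c.Pw L r (c.lamSeqW L a), coroot (c.Pw L r (c.lamSeqW L i))⟫
        = ⟪c.lamSeqW L a, coroot (c.lamSeqW L i)⟫ := by
      rw [(c.Pw_nice L r).coroot, (c.Pw_nice L r).inner]
    rwa [h3] at h2
  have hmove : ∀ a : Fin L.length, srefl (c.lamSeqW L i) (c.lamSeqW L a) - c.lamSeqW L a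
      = -(⟪c.lamSeqW L a, coroot (c.lamSeqW L i)⟫ • c.lamSeqW L i) := by
    intro a
    rw [srefl_eq]
    abel
  set TA := T.filter (fun a => c.Pw L r (srefl (c.lamSeqW L i) (c.lamSeqW L a)) ∈ c.pos)
    with hTA
  set TB := T.filter (fun a => ¬ (c.Pw L r (srefl (c.lamSeqW L i) (c.lamSeqW L a)) ∈ c.pos))
    with hTB
  have hA_map : ∀ a ∈ TA, ∃ b ∈ TA, srefl (c.lamSeqW L i) (c.lamSeqW L a) = c.lamSeqW L b := by
    intro a ha
    rw [hTA, Finset.mem_filter] at ha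
    obtain ⟨haT, hpa⟩ := ha
    obtain ⟨har, hai⟩ := hTfacts a haT
    have hζR : srefl (c.lamSeqW L i) (c.lamSeqW L a) ∈ c.R := hsβnice.rmem (hseqR a)
    have hζpos : srefl (c.lamSeqW L i) (c.lamSeqW L a) ∈ c.pos := by
      by_contra hcon
      have hnζ : -(srefl (c.lamSeqW L i) (c.lamSeqW L a)) ∈ c.pos :=
        (c.neg_pos_iff hζR).mp hcon
      have hm : -(srefl (c.lamSeqW L i) (c.lamSeqW L a)) ∈ c.lamW (c.Pw L r) := by
        rw [c.mem_lamW]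
        refine ⟨hnζ, ?_⟩
        rw [(c.Pw_nice L r).neg, neg_neg]
        exact hpa
      have hm2 : -(srefl (c.lamSeqW L i) (c.lamSeqW L a)) ∈ c.lamW (c.Pw L ((i : ℕ) + 1)) :=
        c.lamW_prefix_mono L hred (by omega) (by omega) hm
      have hm3 := ((c.mem_lamW).mp hm2).2
      rw [(c.Pw_nice L ((i : ℕ) + 1)).neg, neg_neg, hPis] at hm3
      exact (c.not_neg_pos hm3) (c.Pw_seq_neg L hred hai (by omega))
    have hζneg : -(c.Pw L ((i : ℕ) + 1) (srefl (c.lamSeqW L i) (c.lamSeqW L a))) ∈ c.pos := by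
      rw [hPis]
      exact c.Pw_seq_neg L hred hai (by omega)
    obtain ⟨b, hb1, hb2⟩ := c.Pw_complete L hred hζpos hζneg (by omega)
    have hbi : b ≠ i := by
      rintro rfl
      have hβa : c.lamSeqW L a = -(c.lamSeqW L b) := by
        have h4 := congrArg (srefl (c.lamSeqW L b)) hb2
        rw [srefl_invol hβne] at h4
        rw [h4, srefl_self hβne]
      exact (c.not_neg_pos hβpos) (hβa ▸ hseqpos a)
    have hbiN : (b : ℕ) ≠ (i : ℕ) := fun h => hbi (Fin.ext h)
    have hbr : (r : ℕ) ≤ (b : ℕ) := by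
      by_contra hcon
      push_neg at hcon
      have h5 := c.Pw_seq_neg L hred (k := b) (a := r) hcon (by omega)
      rw [← hb2] at h5
      exact (c.not_neg_pos hpa) h5
    refine ⟨b, ?_, hb2⟩
    rw [hTA, Finset.mem_filter]
    refine ⟨?_, ?_⟩
    · rw [hT]
      simp only [Finset.mem_filter, Finset.mem_univ, true_and]
      exact ⟨hbr, by omega⟩
    · have h5 : srefl (c.lamSeqW L i) (c.lamSeqW L b) = c.lamSeqW L a := by
        rw [← hb2, srefl_invol hβne]
      rw [h5]
      exact c.Pw_seq_pos L hred har
  have hsβinj : ∀ {x y : Fin L.length},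
      srefl (c.lamSeqW L i) (c.lamSeqW L x) = srefl (c.lamSeqW L i) (c.lamSeqW L y) →
      x = y := by
    intro x y hxy
    have h := congrArg (srefl (c.lamSeqW L i)) hxy
    rw [srefl_invol hβne, srefl_invol hβne] at h
    exact hseqinj h
  have hAimg : TA.image (fun a => srefl (c.lamSeqW L i) (c.lamSeqW L a))
      = TA.image (c.lamSeqW L) := by
    apply Finset.Subset.antisymm
    · intro x hx
      obtain ⟨a, ha, rfl⟩ := Finset.mem_image.mp hx
      obtain ⟨b, hb, hab⟩ := hA_map a ha
      rw [hab]
      exact Finset.mem_image_of_mem _ hb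
    · intro x hx
      obtain ⟨a, ha, rfl⟩ := Finset.mem_image.mp hx
      obtain ⟨b, hb, hab⟩ := hA_map a ha
      apply Finset.mem_image.mpr
      refine ⟨b, hb, ?_⟩
      rw [← hab, srefl_invol hβne]
  have hAsum : ∀ (F : EV n → ℝ),
      ∑ a ∈ TA, F (srefl (c.lamSeqW L i) (c.lamSeqW L a)) = ∑ a ∈ TA, F (c.lamSeqW L a) := by
    intro F
    rw [← Finset.sum_image (f := F) (g := fun a => srefl (c.lamSeqW L i) (c.lamSeqW L a))
      (fun x _ y _ h => hsβinj h)]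
    rw [← Finset.sum_image (f := F) (g := c.lamSeqW L) (fun x _ y _ h => hseqinj h)]
    rw [hAimg]
  -- reduce the goal
  rw [hsplit, Finset.sum_insert hiT]
  have hTsum : ∀ (F : Fin L.length → ℝ), ∑ a ∈ T, F a = ∑ a ∈ TA, F a + ∑ a ∈ TB, F a := by
    intro F
    rw [hTA, hTB]
    exact (Finset.sum_filter_add_sum_filter_not T _ F).symm
  rw [hTsum (fun a => f (c.lamSeqW L a)),
    hTsum (fun a => f (srefl (c.lamSeqW L i) (c.lamSeqW L a))), hAsum f]
  have hmain : f (c.lamSeqW L i) + ∑ a ∈ TB, f (c.lamSeqW L a)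
      ≤ g (c.lamSeqW L i) + ∑ a ∈ TB, f (srefl (c.lamSeqW L i) (c.lamSeqW L a)) := by
    by_cases hvβ : v (c.lamSeqW L i) ∈ c.pos
    · -- case 1 : v β positive
      have hg0 : g (c.lamSeqW L i) = 0 := by rw [hgval, if_pos hvβ]
      have hfβ : f (c.lamSeqW L i) = 0 := by
        rw [hfval, if_neg]
        rintro ⟨-, h⟩
        exact (c.not_neg_pos hvβ) h
      rw [hg0, hfβ, zero_add, zero_add]
      apply Finset.sum_le_sum
      intro a haB
      rw [hTB, Finset.mem_filter] at haB
      obtain ⟨haT, hnB⟩ := haB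
      by_cases hcond : nuu (c.lamSeqW L a) = ν ∧ -(v (c.lamSeqW L a)) ∈ c.pos
      · obtain ⟨hnua, hva⟩ := hcond
        have hk := hkpos a haT hnB
        have hζR : srefl (c.lamSeqW L i) (c.lamSeqW L a) ∈ c.R := hsβnice.rmem (hseqR a)
        have hvζR : v (srefl (c.lamSeqW L i) (c.lamSeqW L a)) ∈ c.R := hvN.rmem hζR
        have hvζneg : -(v (srefl (c.lamSeqW L i) (c.lamSeqW L a))) ∈ c.pos := by
          by_contra hcon
          have hq : v (srefl (c.lamSeqW L i) (c.lamSeqW L a)) ∈ c.pos := by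
            by_contra hcon2
            exact hcon ((c.neg_pos_iff hvζR).mp hcon2)
          have hsum : -(v (c.lamSeqW L a)) + v (srefl (c.lamSeqW L i) (c.lamSeqW L a))
              = (-⟪c.lamSeqW L a, coroot (c.lamSeqW L i)⟫) • v (c.lamSeqW L i) := by
            have h1 : -(v (c.lamSeqW L a)) + v (srefl (c.lamSeqW L i) (c.lamSeqW L a))
                = v (srefl (c.lamSeqW L i) (c.lamSeqW L a) - c.lamSeqW L a) := by
              rw [hvN.sub]
              abel
            rw [h1, hmove a, hvN.neg, hvN.smul, neg_smul]
          have := c.k_pos_of_sum hva hq hvβ hsum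
          linarith
        rw [hfval (c.lamSeqW L a), if_pos ⟨hnua, hva⟩,
          hfval (srefl (c.lamSeqW L i) (c.lamSeqW L a)), if_pos]
        exact ⟨by rw [hsβnice.nuu]; exact hnua, hvζneg⟩
      · rw [hfval (c.lamSeqW L a), if_neg hcond]
        exact hf0 _
    · -- case 2 : v β negative
      have hvβR : v (c.lamSeqW L i) ∈ c.R := hvN.rmem hβR
      have hγpos : -(v (c.lamSeqW L i)) ∈ c.pos := (c.neg_pos_iff hvβR).mp hvβ
      have hγR : -(v (c.lamSeqW L i)) ∈ c.R := c.mem_R_of_pos hγpos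
      have hγ2 : ⟪-(v (c.lamSeqW L i)), -(v (c.lamSeqW L i))⟫ ≠ 0 := c.inner_self_ne hγR
      have hgβ : g (c.lamSeqW L i) = ⟪c.rhoCheck ν, -(v (c.lamSeqW L i))⟫ := by
        rw [hgval, if_neg hvβ, inner_neg_right]
      have hnuγ : nuu (-(v (c.lamSeqW L i))) = nuu (c.lamSeqW L i) := by
        rw [nuu_neg, hvN.nuu]
      set B1 := TB.filter (fun a => nuu (c.lamSeqW L a) = ν ∧ -(v (c.lamSeqW L a)) ∈ c.pos
        ∧ v (srefl (c.lamSeqW L i) (c.lamSeqW L a)) ∈ c.pos) with hB1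
      have hstepA : ∑ a ∈ TB, f (c.lamSeqW L a)
          ≤ ∑ a ∈ TB, f (srefl (c.lamSeqW L i) (c.lamSeqW L a)) + (B1.card : ℝ) := by
        have hle : ∀ a ∈ TB, f (c.lamSeqW L a)
            ≤ f (srefl (c.lamSeqW L i) (c.lamSeqW L a)) +
              (if nuu (c.lamSeqW L a) = ν ∧ -(v (c.lamSeqW L a)) ∈ c.pos
                ∧ v (srefl (c.lamSeqW L i) (c.lamSeqW L a)) ∈ c.pos then (1:ℝ) else 0) := by
          intro a haB
          by_cases hcond : nuu (c.lamSeqW L a) = ν ∧ -(v (c.lamSeqW L a)) ∈ c.pos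
          · obtain ⟨hnua, hva⟩ := hcond
            by_cases hq : v (srefl (c.lamSeqW L i) (c.lamSeqW L a)) ∈ c.pos
            · rw [if_pos ⟨hnua, hva, hq⟩]
              have h3 := hf0 (srefl (c.lamSeqW L i) (c.lamSeqW L a))
              have h4 := hfle (c.lamSeqW L a)
              linarith
            · have hζR : srefl (c.lamSeqW L i) (c.lamSeqW L a) ∈ c.R :=
                hsβnice.rmem (hseqR a)
              have hvζR : v (srefl (c.lamSeqW L i) (c.lamSeqW L a)) ∈ c.R := hvN.rmem hζR
              have hvζneg := (c.neg_pos_iff hvζR).mp hq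
              have h1 : f (srefl (c.lamSeqW L i) (c.lamSeqW L a)) = 1 := by
                rw [hfval, if_pos]
                exact ⟨by rw [hsβnice.nuu]; exact hnua, hvζneg⟩
              rw [h1]
              have h3 : f (c.lamSeqW L a) ≤ 1 := hfle _
              have h2 : (0:ℝ) ≤ (if nuu (c.lamSeqW L a) = ν ∧ -(v (c.lamSeqW L a)) ∈ c.pos
                  ∧ v (srefl (c.lamSeqW L i) (c.lamSeqW L a)) ∈ c.pos then (1:ℝ) else 0) := by
                split <;> norm_num
              linarith
          · have h1 : f (c.lamSeqW L a) = 0 := by rw [hfval, if_neg hcond]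
            rw [h1]
            have h2 : (0:ℝ) ≤ (if nuu (c.lamSeqW L a) = ν ∧ -(v (c.lamSeqW L a)) ∈ c.pos
                ∧ v (srefl (c.lamSeqW L i) (c.lamSeqW L a)) ∈ c.pos then (1:ℝ) else 0) := by
              split <;> norm_num
            have h3 := hf0 (srefl (c.lamSeqW L i) (c.lamSeqW L a))
            linarith
        calc ∑ a ∈ TB, f (c.lamSeqW L a)
            ≤ ∑ a ∈ TB, (f (srefl (c.lamSeqW L i) (c.lamSeqW L a)) +
              (if nuu (c.lamSeqW L a) = ν ∧ -(v (c.lamSeqW L a)) ∈ c.pos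
                ∧ v (srefl (c.lamSeqW L i) (c.lamSeqW L a)) ∈ c.pos then (1:ℝ) else 0)) :=
              Finset.sum_le_sum hle
          _ = ∑ a ∈ TB, f (srefl (c.lamSeqW L i) (c.lamSeqW L a)) + (B1.card : ℝ) := by
              rw [Finset.sum_add_distrib, hB1, Finset.sum_boole]
      have hstepB : f (c.lamSeqW L i) + (B1.card : ℝ)
          ≤ ⟪c.rhoCheck ν, -(v (c.lamSeqW L i))⟫ := by
        have hB1mem : ∀ a ∈ B1, (a ∈ T) ∧
            ¬(c.Pw L r (srefl (c.lamSeqW L i) (c.lamSeqW L a)) ∈ c.pos) ∧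
            nuu (c.lamSeqW L a) = ν ∧ -(v (c.lamSeqW L a)) ∈ c.pos ∧
            v (srefl (c.lamSeqW L i) (c.lamSeqW L a)) ∈ c.pos := by
          intro a ha
          rw [hB1, Finset.mem_filter] at ha
          obtain ⟨haB, h1, h2, h3⟩ := ha
          rw [hTB, Finset.mem_filter] at haB
          exact ⟨haB.1, haB.2, h1, h2, h3⟩
        have hμε : ∀ a ∈ B1, -(v (c.lamSeqW L a)) + v (srefl (c.lamSeqW L i) (c.lamSeqW L a))
            = ⟪c.lamSeqW L a, coroot (c.lamSeqW L i)⟫ • (-(v (c.lamSeqW L i))) := by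
          intro a _
          have h1 : -(v (c.lamSeqW L a)) + v (srefl (c.lamSeqW L i) (c.lamSeqW L a))
              = v (srefl (c.lamSeqW L i) (c.lamSeqW L a) - c.lamSeqW L a) := by
            rw [hvN.sub]
            abel
          rw [h1, hmove a, hvN.neg, hvN.smul, smul_neg]
        have hμcor : ∀ a : Fin L.length,
            ⟪-(v (c.lamSeqW L a)), coroot (-(v (c.lamSeqW L i)))⟫
            = ⟪c.lamSeqW L a, coroot (c.lamSeqW L i)⟫ := by
          intro a
          rw [coroot_neg, hvN.coroot, inner_neg_neg, hvN.inner]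
        have hεcor : ∀ a ∈ B1,
            ⟪v (srefl (c.lamSeqW L i) (c.lamSeqW L a)), coroot (-(v (c.lamSeqW L i)))⟫
            = ⟪c.lamSeqW L a, coroot (c.lamSeqW L i)⟫ := by
          intro a ha
          have h1 : v (srefl (c.lamSeqW L i) (c.lamSeqW L a))
              = ⟪c.lamSeqW L a, coroot (c.lamSeqW L i)⟫ • (-(v (c.lamSeqW L i)))
                - (-(v (c.lamSeqW L a))) := by
            rw [← hμε a ha]
            abel
          rw [h1, inner_sub_left, real_inner_smul_left, inner_coroot_self hγ2, hμcor a]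
          ring
        have hsμ : ∀ a ∈ B1, srefl (-(v (c.lamSeqW L i))) (-(v (c.lamSeqW L a)))
            = -(v (srefl (c.lamSeqW L i) (c.lamSeqW L a))) := by
          intro a ha
          rw [srefl_eq, hμcor a, ← hμε a ha]
          abel
        have hsε : ∀ a ∈ B1, srefl (-(v (c.lamSeqW L i)))
            (v (srefl (c.lamSeqW L i) (c.lamSeqW L a))) = v (c.lamSeqW L a) := by
          intro a ha
          rw [srefl_eq, hεcor a ha, ← hμε a ha]
          abel
        set S := B1.image (fun a => -(v (c.lamSeqW L a)))
          ∪ B1.image (fun a => v (srefl (c.lamSeqW L i) (c.lamSeqW L a))) with hS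
        have hSsub : S ⊆ c.lamNuSet (-(v (c.lamSeqW L i))) ν := by
          intro x hx
          rw [hS, Finset.mem_union] at hx
          rw [lamNuSet, Finset.mem_filter]
          rcases hx with hx | hx
          · obtain ⟨a, ha, rfl⟩ := Finset.mem_image.mp hx
            obtain ⟨haT, hnB, hnua, hva, hq⟩ := hB1mem a ha
            refine ⟨hva, ?_, ?_⟩
            · rw [nuu_neg, hvN.nuu]
              exact hnua
            · rw [hsμ a ha, neg_neg]
              exact hq
          · obtain ⟨a, ha, rfl⟩ := Finset.mem_image.mp hx
            obtain ⟨haT, hnB, hnua, hva, hq⟩ := hB1mem a ha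
            refine ⟨hq, ?_, ?_⟩
            · rw [hvN.nuu, hsβnice.nuu]
              exact hnua
            · rw [hsε a ha]
              exact hva
        have hγnS : -(v (c.lamSeqW L i)) ∉ S := by
          intro hx
          rw [hS, Finset.mem_union] at hx
          rcases hx with hx | hx
          · obtain ⟨a, ha, hEq⟩ := Finset.mem_image.mp hx
            obtain ⟨haT, -, -, -, -⟩ := hB1mem a ha
            have h1 : v (c.lamSeqW L a) = v (c.lamSeqW L i) := by
              have h2 := congrArg Neg.neg hEq
              rwa [neg_neg, neg_neg] at h2
            have h2 := hseqinj (hvinj h1)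
            obtain ⟨-, hai⟩ := hTfacts a haT
            rw [h2] at hai
            omega
          · obtain ⟨a, ha, hEq⟩ := Finset.mem_image.mp hx
            obtain ⟨haT, -, -, -, -⟩ := hB1mem a ha
            have h1 : srefl (c.lamSeqW L i) (c.lamSeqW L a) = -(c.lamSeqW L i) := by
              apply hvinj
              rw [hvN.neg]
              exact hEq
            have h2 : c.lamSeqW L a = c.lamSeqW L i := by
              have h3 := congrArg (srefl (c.lamSeqW L i)) h1
              rwa [srefl_invol hβne, srefl_neg, srefl_self hβne, neg_neg] at h3
            have h4 := hseqinj h2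
            obtain ⟨-, hai⟩ := hTfacts a haT
            rw [h4] at hai
            omega
        have hlow : ∀ x ∈ S,
            ν / nuu (-(v (c.lamSeqW L i))) ≤ ⟪x, coroot (-(v (c.lamSeqW L i)))⟫ := by
          intro x hx
          rw [hS, Finset.mem_union] at hx
          have hbound : ∀ a ∈ B1, ν / nuu (-(v (c.lamSeqW L i)))
              ≤ ⟪c.lamSeqW L a, coroot (c.lamSeqW L i)⟫ := by
            intro a ha
            obtain ⟨haT, hnB, hnua, -, -⟩ := hB1mem a ha
            have hk := hkpos a haT hnB
            have h5 := c.coroot_ratio (hseqR a) hβR hk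
            rw [hnua, ← hnuγ] at h5
            exact h5
          rcases hx with hx | hx
          · obtain ⟨a, ha, rfl⟩ := Finset.mem_image.mp hx
            rw [hμcor a]
            exact hbound a ha
          · obtain ⟨a, ha, rfl⟩ := Finset.mem_image.mp hx
            rw [hεcor a ha]
            exact hbound a ha
        have hdisj : Disjoint (B1.image (fun a => -(v (c.lamSeqW L a))))
            (B1.image (fun a => v (srefl (c.lamSeqW L i) (c.lamSeqW L a)))) := by
          rw [Finset.disjoint_left]
          intro x hx hx'
          obtain ⟨a, ha, hEq⟩ := Finset.mem_image.mp hx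
          obtain ⟨a', ha', hEq'⟩ := Finset.mem_image.mp hx'
          obtain ⟨haT, -, -, -, -⟩ := hB1mem a ha
          obtain ⟨haT', -, -, -, -⟩ := hB1mem a' ha'
          obtain ⟨-, hai⟩ := hTfacts a haT
          obtain ⟨-, hai'⟩ := hTfacts a' haT'
          have h1 : srefl (c.lamSeqW L i) (c.lamSeqW L a') = -(c.lamSeqW L a) := by
            apply hvinj
            rw [hvN.neg, hEq]
            exact hEq'
          have h2 : c.Pw L ((i:ℕ)+1) (c.lamSeqW L a) ∈ c.pos := by
            have h3 : c.lamSeqW L a = -(srefl (c.lamSeqW L i) (c.lamSeqW L a')) := by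
              rw [h1, neg_neg]
            rw [h3, (c.Pw_nice L ((i:ℕ)+1)).neg, hPis]
            exact c.Pw_seq_neg L hred hai' (by omega)
          exact (c.not_neg_pos h2) (c.Pw_seq_neg L hred (by omega) (by omega))
        have hcard : (S.card : ℝ) = 2 * (B1.card : ℝ) := by
          rw [hS, Finset.card_union_of_disjoint hdisj]
          rw [Finset.card_image_of_injOn, Finset.card_image_of_injOn]
          · push_cast
            ring
          · intro x hx y hy hxy
            apply hsβinj
            apply hvinj
            exact hxy
          · intro x hx y hy hxy
            apply hseqinj
            apply hvinj
            have h2 := congrArg Neg.neg hxy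
            rwa [neg_neg, neg_neg] at h2
        have hmc := c.main_count hγpos hν0 S hSsub hγnS hlow
        rw [hcard] at hmc
        have hfβval : f (c.lamSeqW L i)
            = (if nuu (-(v (c.lamSeqW L i))) = ν then (1:ℝ) else 0) := by
          rw [hfval, hnuγ]
          by_cases hc : nuu (c.lamSeqW L i) = ν
          · rw [if_pos hc, if_pos ⟨hc, hγpos⟩]
          · rw [if_neg hc, if_neg]
            rintro ⟨h, -⟩
            exact hc h
        rw [hfβval]
        linarith
      rw [hgβ]
      linarith
  linarith


open RootCtx in
/-- Lemma 5.3, Part A, inequality (5.2).  Let u ∈ W with reduced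
word L and λ-sequence α¹,…,α^l, let r ≤ i, w ∈ W (with inverse v) and ν a ν-value.
With f and g as below, g(αⁱ) + Σ_{a=r}^{i−1} f(s_{αⁱ}(α^a)) ≥ Σ_{a=r}^{i} f(α^a). -/
theorem t_order_inequality_nonaffine {n : ℕ} (c : RootCtx n)
    (L : List (Fin n)) (hred : L.length = c.lenW (c.wWord L))
    (r i : Fin L.length) (hri : r ≤ i)
    (w v : EV n → EV n) (hw : c.IsWeyl w) (hv : c.IsWeyl v)
    (hinv : ∀ x, v (w x) = x ∧ w (v x) = x)
    (ν : ℝ) (hν : ∃ γ ∈ c.R, nuu γ = ν)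
    (f : EV n → ℝ)
    (hf : f = fun β => if nuu β = ν ∧ -(v β) ∈ c.pos then 1 else 0)
    (g : EV n → ℝ)
    (hg : g = fun β => if v β ∈ c.pos then 0 else -⟪c.rhoCheck ν, v β⟫) :
    (∑ a ∈ Finset.univ.filter (fun a : Fin L.length => r ≤ a ∧ a ≤ i),
        f (c.lamSeqW L a))
      ≤ g (c.lamSeqW L i) +
        ∑ a ∈ Finset.univ.filter (fun a : Fin L.length => r ≤ a ∧ a < i),
          f (srefl (c.lamSeqW L i) (c.lamSeqW L a)) := by
  exact t_order_inequality_nonaffine' c L hred r i hri w v hw hv hinv ν hν f hf g hg
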